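/- Let (X, M, *) be a compact fuzzy metric space, t₀ ∈ (0,∞), r₀ ∈ (0,1). For every ε > 0 there exists η > 0 such that B(x, r₀ + ε, t) ⊇ B(x, r₀, t₀) for every x ∈ X whenever |t - t₀| < η. -/

import Mathlib

open Set MeasureTheory Filter Topology

noncomputable section

/-- The Łukasiewicz t-norm. -/
def luk (a b : ℝ) : ℝ := max (a + b - 1) 0

/-- A continuous t-norm on `[0,1]`. -/
structure IsContinuousTNorm (star : ℝ → ℝ → ℝ) : Prop where
  maps_to : ∀ a b, a ∈ Icc (0:ℝ) 1 → b ∈ Icc (0:ℝ) 1 → star a b ∈ Icc (0:ℝ) 1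
  comm : ∀ a b, a ∈ Icc (0:ℝ) 1 → b ∈ Icc (0:ℝ) 1 → star a b = star b a
  assoc : ∀ a b c, a ∈ Icc (0:ℝ) 1 → b ∈ Icc (0:ℝ) 1 → c ∈ Icc (0:ℝ) 1 →
    star (star a b) c = star a (star b c)
  continuous : ContinuousOn (fun p : ℝ × ℝ => star p.1 p.2) (Icc 0 1 ×ˢ Icc 0 1)
  one_right : ∀ a, a ∈ Icc (0:ℝ) 1 → star a 1 = a
  mono : ∀ a b c d, a ∈ Icc (0:ℝ) 1 → b ∈ Icc (0:ℝ) 1 → c ∈ Icc (0:ℝ) 1 →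
    d ∈ Icc (0:ℝ) 1 → a ≤ c → b ≤ d → star a b ≤ star c d

/-- A fuzzy metric (George–Veeramani) with respect to a t-norm `star`. -/
structure IsFuzzyMetric {X : Type*} (M : X → X → ℝ → ℝ) (star : ℝ → ℝ → ℝ) : Prop where
  pos : ∀ x y t, 0 < t → 0 < M x y t
  le_one : ∀ x y t, 0 < t → M x y t ≤ 1
  eq_one_iff : ∀ x y t, 0 < t → (M x y t = 1 ↔ x = y)
  symm : ∀ x y t, 0 < t → M x y t = M y x t
  triangle : ∀ x y z t s, 0 < t → 0 < s → star (M x y t) (M y z s) ≤ M x z (t + s)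
  continuousOn : ∀ x y, ContinuousOn (fun t => M x y t) (Ioi (0:ℝ))

/-- The open ball `B(x,r,t)` in a fuzzy metric space. -/
def fmBall {X : Type*} (M : X → X → ℝ → ℝ) (x : X) (r t : ℝ) : Set X :=
  {y | 1 - r < M x y t}

/-- The `r,t`-expansion `A^{r,t}` of a set `A`. -/
def fmExpand {X : Type*} (M : X → X → ℝ → ℝ) (A : Set X) (r t : ℝ) : Set X :=
  ⋃ x ∈ A, fmBall M x r t

/-- The fuzzy metric `M` generates the given topology on `X`. -/
def GeneratesTopology {X : Type*} [TopologicalSpace X] (M : X → X → ℝ → ℝ) : Prop :=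
  TopologicalSpace.IsTopologicalBasis
    {s : Set X | ∃ x r t, 0 < r ∧ r < 1 ∧ 0 < t ∧ s = fmBall M x r t}

/-- The set of admissible radii in the definition of the fuzzy Prokhorov metric. -/
def prokSet {X : Type*} [MeasurableSpace X] (M : X → X → ℝ → ℝ)
    (μ ν : Measure X) (t : ℝ) : Set ℝ :=
  {r | 0 < r ∧ r < 1 ∧ ∀ A : Set X, MeasurableSet A →
    μ A ≤ ν (fmExpand M A r t) + ENNReal.ofReal r ∧
    ν A ≤ μ (fmExpand M A r t) + ENNReal.ofReal r}

/-- The fuzzy Prokhorov function `M̂` on measures. -/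
def fuzzyProkhorov {X : Type*} [MeasurableSpace X] (M : X → X → ℝ → ℝ)
    (μ ν : Measure X) (t : ℝ) : ℝ :=
  1 - sInf (prokSet M μ ν t)

lemma tendsto_star_aux {star : ℝ → ℝ → ℝ} (hstar : IsContinuousTNorm star)
    {u v : ℕ → ℝ} {a b : ℝ} (hu : Tendsto u atTop (𝓝 a)) (hv : Tendsto v atTop (𝓝 b))
    (hum : ∀ n, u n ∈ Icc (0:ℝ) 1) (hvm : ∀ n, v n ∈ Icc (0:ℝ) 1)
    (ha : a ∈ Icc (0:ℝ) 1) (hb : b ∈ Icc (0:ℝ) 1) :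
    Tendsto (fun n => star (u n) (v n)) atTop (𝓝 (star a b)) := by
  have hc := hstar.continuous (a, b) ⟨ha, hb⟩
  have h1 : Tendsto (fun n => (u n, v n)) atTop (𝓝[Icc (0:ℝ) 1 ×ˢ Icc (0:ℝ) 1] (a,b)) :=
    tendsto_nhdsWithin_of_tendsto_nhds_of_eventually_within _ (hu.prodMk_nhds hv)
      (Eventually.of_forall fun n => ⟨hum n, hvm n⟩)
  exact Filter.Tendsto.comp hc h1
lemma choose_rho_gamma {star : ℝ → ℝ → ℝ} (hstar : IsContinuousTNorm star)
    {r₀ ε : ℝ} (hr₀ : r₀ ∈ Ioo (0:ℝ) 1) (hε : 0 < ε) :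
    ∃ ρ γ : ℝ, 0 < ρ ∧ ρ < 1 ∧ 0 < γ ∧
      1 - r₀ - ε <
        star (1-ρ) (star (max (star (1-ρ) (star (1-r₀) (1-ρ)) - 2*γ) 0) (1-ρ)) := by
  obtain ⟨hr₀0, hr₀1⟩ := hr₀
  have hone : (1:ℝ) ∈ Icc (0:ℝ) 1 := ⟨zero_le_one, le_refl 1⟩
  have hr : (1 - r₀) ∈ Icc (0:ℝ) 1 := ⟨by linarith, by linarith⟩
  have hg0 : ∀ n : ℕ, 0 < ((n:ℝ)+1)⁻¹ := fun n => by positivity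
  have hg1 : ∀ n : ℕ, ((n:ℝ)+1)⁻¹ ≤ 1 := fun n => by
    rw [inv_le_one₀ (by positivity)]
    simp
  have hcm : ∀ n : ℕ, 1 - ((n:ℝ)+1)⁻¹ ∈ Icc (0:ℝ) 1 :=
    fun n => ⟨by linarith [hg1 n], by linarith [hg0 n]⟩
  have hgt : Tendsto (fun n : ℕ => ((n:ℝ)+1)⁻¹) atTop (𝓝 0) := by
    simpa [one_div] using tendsto_one_div_add_atTop_nhds_zero_nat (𝕜 := ℝ)
  have hct : Tendsto (fun n : ℕ => 1 - ((n:ℝ)+1)⁻¹) atTop (𝓝 1) := by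
    simpa using (tendsto_const_nhds (x := (1:ℝ)) (f := atTop (α := ℕ))).sub hgt
  have hu1m : ∀ n : ℕ, star (1-r₀) (1 - ((n:ℝ)+1)⁻¹) ∈ Icc (0:ℝ) 1 :=
    fun n => hstar.maps_to _ _ hr (hcm n)
  have hu1t : Tendsto (fun n : ℕ => star (1-r₀) (1 - ((n:ℝ)+1)⁻¹)) atTop (𝓝 (1-r₀)) := by
    have := tendsto_star_aux hstar (tendsto_const_nhds) hct (fun _ => hr) hcm hr hone
    rwa [hstar.one_right _ hr] at this
  have hu2m : ∀ n : ℕ, star (1 - ((n:ℝ)+1)⁻¹) (star (1-r₀) (1 - ((n:ℝ)+1)⁻¹)) ∈ Icc (0:ℝ) 1 :=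
    fun n => hstar.maps_to _ _ (hcm n) (hu1m n)
  have hu2t : Tendsto (fun n : ℕ => star (1 - ((n:ℝ)+1)⁻¹) (star (1-r₀) (1 - ((n:ℝ)+1)⁻¹)))
      atTop (𝓝 (1-r₀)) := by
    have := tendsto_star_aux hstar hct hu1t hcm hu1m hone hr
    rwa [hstar.comm _ _ hone hr, hstar.one_right _ hr] at this
  have hu3m : ∀ n : ℕ,
      max (star (1 - ((n:ℝ)+1)⁻¹) (star (1-r₀) (1 - ((n:ℝ)+1)⁻¹)) - 2*((n:ℝ)+1)⁻¹) 0
        ∈ Icc (0:ℝ) 1 :=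
    fun n => ⟨le_max_right _ _, max_le (by linarith [(hu2m n).2, (hg0 n).le]) zero_le_one⟩
  have hu3t : Tendsto (fun n : ℕ =>
      max (star (1 - ((n:ℝ)+1)⁻¹) (star (1-r₀) (1 - ((n:ℝ)+1)⁻¹)) - 2*((n:ℝ)+1)⁻¹) 0)
      atTop (𝓝 (1-r₀)) := by
    have h2 : Tendsto (fun n : ℕ => 2*((n:ℝ)+1)⁻¹) atTop (𝓝 0) := by
      simpa using hgt.const_mul 2
    have h1 := hu2t.sub h2
    rw [sub_zero] at h1
    have := h1.max (tendsto_const_nhds (x := (0:ℝ)) (f := atTop (α := ℕ)))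
    rwa [max_eq_left (by linarith : (0:ℝ) ≤ 1 - r₀)] at this
  have hu4m : ∀ n : ℕ, star
      (max (star (1 - ((n:ℝ)+1)⁻¹) (star (1-r₀) (1 - ((n:ℝ)+1)⁻¹)) - 2*((n:ℝ)+1)⁻¹) 0)
      (1 - ((n:ℝ)+1)⁻¹) ∈ Icc (0:ℝ) 1 :=
    fun n => hstar.maps_to _ _ (hu3m n) (hcm n)
  have hu4t : Tendsto (fun n : ℕ => star
      (max (star (1 - ((n:ℝ)+1)⁻¹) (star (1-r₀) (1 - ((n:ℝ)+1)⁻¹)) - 2*((n:ℝ)+1)⁻¹) 0)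
      (1 - ((n:ℝ)+1)⁻¹)) atTop (𝓝 (1-r₀)) := by
    have := tendsto_star_aux hstar hu3t hct hu3m hcm hr hone
    rwa [hstar.one_right _ hr] at this
  have hu5t : Tendsto (fun n : ℕ => star (1 - ((n:ℝ)+1)⁻¹) (star
      (max (star (1 - ((n:ℝ)+1)⁻¹) (star (1-r₀) (1 - ((n:ℝ)+1)⁻¹)) - 2*((n:ℝ)+1)⁻¹) 0)
      (1 - ((n:ℝ)+1)⁻¹))) atTop (𝓝 (1-r₀)) := by
    have := tendsto_star_aux hstar hct hu4t hcm hu4m hone hr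
    rwa [hstar.comm _ _ hone hr, hstar.one_right _ hr] at this
  have hev := hu5t.eventually (eventually_gt_nhds (by linarith : 1 - r₀ - ε < 1 - r₀))
  obtain ⟨n, hn, hn1⟩ := (hev.and (eventually_ge_atTop 1)).exists
  refine ⟨((n:ℝ)+1)⁻¹, ((n:ℝ)+1)⁻¹, hg0 n, ?_, hg0 n, hn⟩
  have h1n : (1:ℝ) ≤ (n:ℝ) := by exact_mod_cast hn1
  rw [inv_lt_one₀ (by positivity)]
  linarith

/-- `B(x, r₀+ε, t) ⊇ B(x, r₀, t₀)` for `t` near `t₀`, uniformly in `x`. -/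
theorem fmBall_uniform_enlarge {X : Type*} [TopologicalSpace X] [CompactSpace X]
    (M : X → X → ℝ → ℝ) (star : ℝ → ℝ → ℝ) (hstar : IsContinuousTNorm star)
    (hM : IsFuzzyMetric M star) (hgen : GeneratesTopology M)
    (t₀ r₀ : ℝ) (ht₀ : 0 < t₀) (hr₀ : r₀ ∈ Ioo (0:ℝ) 1) (ε : ℝ) (hε : 0 < ε) :
    ∃ η > 0, ∀ x : X, ∀ t : ℝ, 0 < t → |t - t₀| < η →
      fmBall M x r₀ t₀ ⊆ fmBall M x (r₀ + ε) t := by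
  rcases isEmpty_or_nonempty X with hX | hX
  · exact ⟨1, one_pos, fun x => (hX.false x).elim⟩
  -- basic facts
  have hmem : ∀ x y : X, ∀ t : ℝ, 0 < t → M x y t ∈ Icc (0:ℝ) 1 :=
    fun x y t ht => ⟨(hM.pos x y t ht).le, hM.le_one x y t ht⟩
  have hrefl : ∀ x : X, ∀ t : ℝ, 0 < t → M x x t = 1 :=
    fun x t ht => (hM.eq_one_iff x x t ht).mpr rfl
  have hmono : ∀ x y : X, ∀ s u : ℝ, 0 < s → s ≤ u → M x y s ≤ M x y u := by
    intro x y s u hs hsu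
    rcases eq_or_lt_of_le hsu with rfl | hlt
    · exact le_refl _
    · have htr := hM.triangle x y y s (u - s) hs (by linarith)
      rw [hrefl y (u-s) (by linarith), hstar.one_right _ (hmem x y s hs),
        show s + (u - s) = u by ring] at htr
      exact htr
  -- choose ρ, γ
  obtain ⟨ρ, γ, hρ0, hρ1, hγ0, hkey⟩ := choose_rho_gamma hstar hr₀ hε
  obtain ⟨hr₀0, hr₀1⟩ := hr₀
  set c : ℝ := 1 - ρ with hcdef
  set d : ℝ := max (star c (star (1-r₀) c) - 2*γ) 0 with hddef
  have hcmem : c ∈ Icc (0:ℝ) 1 := ⟨by linarith, by linarith⟩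
  have hrmem : (1 - r₀) ∈ Icc (0:ℝ) 1 := ⟨by linarith, by linarith⟩
  have hscc : star c (star (1-r₀) c) ∈ Icc (0:ℝ) 1 :=
    hstar.maps_to _ _ hcmem (hstar.maps_to _ _ hrmem hcmem)
  have hdmem : d ∈ Icc (0:ℝ) 1 :=
    ⟨le_max_right _ _, max_le (by linarith [hscc.2, hγ0.le]) zero_le_one⟩
  -- choose δ p for every pair p by continuity at t₀
  have hδex : ∀ p : X × X, ∃ δ : ℝ, 0 < δ ∧ δ < t₀/2 ∧
      ∀ s : ℝ, 0 < s → |s - t₀| < 2*δ → |M p.1 p.2 s - M p.1 p.2 t₀| < γ := by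
    intro p
    have hca : ContinuousAt (fun t => M p.1 p.2 t) t₀ :=
      (hM.continuousOn p.1 p.2).continuousAt (Ioi_mem_nhds ht₀)
    obtain ⟨δ', hδ'0, hδ'⟩ := Metric.continuousAt_iff.mp hca γ hγ0
    refine ⟨min (δ'/2) (t₀/4), lt_min (by linarith) (by linarith), ?_, ?_⟩
    · calc min (δ'/2) (t₀/4) ≤ t₀/4 := min_le_right _ _
        _ < t₀/2 := by linarith
    · intro s hs habs
      have h2 : 2 * min (δ'/2) (t₀/4) ≤ δ' := by
        have := min_le_left (δ'/2) (t₀/4); linarith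
      have : dist s t₀ < δ' := by rw [Real.dist_eq]; linarith
      have := hδ' this
      rwa [Real.dist_eq] at this
  choose δ hδ0 hδlt hδγ using hδex
  -- open cover of X × X
  set V : X × X → Set (X × X) :=
    fun p => fmBall M p.1 ρ (δ p / 4) ×ˢ fmBall M p.2 ρ (δ p / 4) with hVdef
  have hVopen : ∀ p, IsOpen (V p) := fun p =>
    (hgen.isOpen ⟨p.1, ρ, δ p / 4, hρ0, hρ1, by linarith [hδ0 p], rfl⟩).prod
      (hgen.isOpen ⟨p.2, ρ, δ p / 4, hρ0, hρ1, by linarith [hδ0 p], rfl⟩)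
  have hself : ∀ p : X × X, p ∈ V p := by
    intro p
    constructor
    · show 1 - ρ < M p.1 p.1 (δ p / 4)
      rw [hrefl p.1 _ (by linarith [hδ0 p])]; linarith
    · show 1 - ρ < M p.2 p.2 (δ p / 4)
      rw [hrefl p.2 _ (by linarith [hδ0 p])]; linarith
  obtain ⟨I, hI⟩ := isCompact_univ.elim_finite_subcover V hVopen
    (fun q _ => mem_iUnion.mpr ⟨q, hself q⟩)
  -- I is nonempty
  have hIne : I.Nonempty := by
    obtain ⟨x0⟩ := hX
    obtain ⟨p, hp, -⟩ := mem_iUnion₂.mp (hI (mem_univ (x0, x0)))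
    exact ⟨p, hp⟩
  -- the final η
  refine ⟨min (t₀/4) (I.inf' hIne fun p => δ p / 2),
    lt_min (by linarith) ((Finset.lt_inf'_iff _).mpr fun p _ => by linarith [hδ0 p]),
    ?_⟩
  intro x t ht htd y hy
  have hy' : 1 - r₀ < M x y t₀ := hy
  show 1 - (r₀ + ε) < M x y t
  rcases le_or_gt t₀ t with hle | hlt
  · have := hmono x y t₀ t ht₀ hle
    linarith
  -- hard case : t₀ - η < t < t₀
  obtain ⟨p, hpI, hpV⟩ := mem_iUnion₂.mp (hI (mem_univ (x, y)))
  obtain ⟨hxa, hyb⟩ := hpV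
  set a : X := p.1
  set b : X := p.2
  set δp : ℝ := δ p with hδpdef
  have hδp0 : 0 < δp := hδ0 p
  have hδp2 : δp < t₀/2 := hδlt p
  have hδp4 : 0 < δp/4 := by linarith
  have hxa' : 1 - ρ < M a x (δp/4) := hxa
  have hyb' : 1 - ρ < M b y (δp/4) := hyb
  have hηδ : min (t₀/4) (I.inf' hIne fun p => δ p / 2) ≤ δp/2 :=
    (min_le_right _ _).trans (Finset.inf'_le _ hpI)
  have htlo : t₀ - δp/2 < t := by
    have h1 := abs_lt.mp htd
    linarith [h1.1]
  have htpos : 0 < t - δp/2 := by linarith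
  -- Chain A : star c (star (1-r₀) c) ≤ M a b (t₀ + δp/2)
  have hyb2 : 1 - ρ < M y b (δp/4) := by rw [hM.symm y b _ hδp4]; exact hyb'
  have hA1 : star (M x y t₀) (M y b (δp/4)) ≤ M x b (t₀ + δp/4) :=
    hM.triangle x y b t₀ (δp/4) ht₀ hδp4
  have hA2 : star (M a x (δp/4)) (M x b (t₀ + δp/4)) ≤ M a b (t₀ + δp/2) := by
    have := hM.triangle a x b (δp/4) (t₀ + δp/4) hδp4 (by linarith)
    rwa [show δp/4 + (t₀ + δp/4) = t₀ + δp/2 by ring] at this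
  have hA3 : star (1-r₀) c ≤ star (M x y t₀) (M y b (δp/4)) :=
    hstar.mono _ _ _ _ hrmem hcmem (hmem x y t₀ ht₀) (hmem y b _ hδp4) hy'.le
      (by linarith)
  have hA4 : star c (star (1-r₀) c) ≤ M a b (t₀ + δp/2) := by
    calc star c (star (1-r₀) c)
        ≤ star (M a x (δp/4)) (star (M x y t₀) (M y b (δp/4))) :=
          hstar.mono _ _ _ _ hcmem (hstar.maps_to _ _ hrmem hcmem)
            (hmem a x _ hδp4)
            (hstar.maps_to _ _ (hmem x y t₀ ht₀) (hmem y b _ hδp4))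
            (by linarith) hA3
      _ ≤ star (M a x (δp/4)) (M x b (t₀ + δp/4)) :=
          hstar.mono _ _ _ _ (hmem a x _ hδp4)
            (hstar.maps_to _ _ (hmem x y t₀ ht₀) (hmem y b _ hδp4))
            (hmem a x _ hδp4) (hmem x b _ (by linarith)) le_rfl hA1
      _ ≤ M a b (t₀ + δp/2) := hA2
  -- continuity bounds
  have hc1 : |M a b (t₀ + δp/2) - M a b t₀| < γ := by
    apply hδγ p (t₀ + δp/2) (by linarith)
    rw [add_sub_cancel_left, abs_of_pos (by linarith)]
    linarith
  have hc2 : |M a b (t - δp/2) - M a b t₀| < γ := by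
    apply hδγ p (t - δp/2) htpos
    rw [abs_lt]
    have h1 := abs_lt.mp htd
    have h2 : min (t₀/4) (I.inf' hIne fun p => δ p / 2) ≤ t₀/4 := min_le_left _ _
    constructor <;> [linarith [h1.1]; linarith [h1.2]]
  have hdle : d ≤ M a b (t - δp/2) := by
    have h1 := abs_lt.mp hc1
    have h2 := abs_lt.mp hc2
    exact max_le (by linarith [h1.1, h1.2, h2.1, h2.2]) (hM.pos a b _ htpos).le
  -- Chain B : star c (star d c) ≤ M x y t
  have hxa2 : 1 - ρ < M x a (δp/4) := by rw [hM.symm x a _ hδp4]; exact hxa'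
  have hB1 : star (M a b (t - δp/2)) (M b y (δp/4)) ≤ M a y (t - δp/4) := by
    have := hM.triangle a b y (t - δp/2) (δp/4) htpos hδp4
    rwa [show t - δp/2 + δp/4 = t - δp/4 by ring] at this
  have hB2 : star (M x a (δp/4)) (M a y (t - δp/4)) ≤ M x y t := by
    have := hM.triangle x a y (δp/4) (t - δp/4) hδp4 (by linarith)
    rwa [show δp/4 + (t - δp/4) = t by ring] at this
  have hB3 : star d c ≤ star (M a b (t - δp/2)) (M b y (δp/4)) :=
    hstar.mono _ _ _ _ hdmem hcmem (hmem a b _ htpos) (hmem b y _ hδp4) hdle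
      (by linarith)
  have hB4 : star c (star d c) ≤ M x y t := by
    calc star c (star d c)
        ≤ star (M x a (δp/4)) (star (M a b (t - δp/2)) (M b y (δp/4))) :=
          hstar.mono _ _ _ _ hcmem (hstar.maps_to _ _ hdmem hcmem)
            (hmem x a _ hδp4)
            (hstar.maps_to _ _ (hmem a b _ htpos) (hmem b y _ hδp4))
            (by linarith) hB3
      _ ≤ star (M x a (δp/4)) (M a y (t - δp/4)) :=
          hstar.mono _ _ _ _ (hmem x a _ hδp4)
            (hstar.maps_to _ _ (hmem a b _ htpos) (hmem b y _ hδp4))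
            (hmem x a _ hδp4) (hmem a y _ (by linarith)) le_rfl hB1
      _ ≤ M x y t := hB2
  have : 1 - r₀ - ε < star c (star d c) := hkey
  linarith
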